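/- Let ℓ ≥ 2 and n be positive integers. Let μ be a Borel probability measure on S^{n−1} such that ∫ (x·θ)² dμ(x) ≤ ℓ^{−50} for every unit vector θ. If X₁,…,X_ℓ are independent random vectors distributed according to μ, then with probability at least 1 − 4ℓ^{−6}, for every 2 ≤ i ≤ ℓ the orthogonal projection of X_i onto the span of X₁,…,X_{i−1} has norm strictly less than ℓ^{−21}/2; in particular, with positive probability the tuple (X₁,…,X_ℓ) is (ℓ^{−20}/2)-orthogonal. -/

import Mathlib

open MeasureTheory ENNReal
open scoped RealInnerProductSpace

/-- An ℓ-tuple of non-zero vectors `v` is ε-orthogonal: there exist orthonormal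
`w₁,…,w_ℓ` and reals `a_{ij}` (j ≤ i) with `v_i = Σ_{j≤i} a_{ij} w_j` and
`|a_{ij}| ≤ ε |a_{ii}|` for `j < i`. -/
def IsEpsOrthogonal {n l : ℕ} (ε : ℝ) (v : Fin l → EuclideanSpace ℝ (Fin n)) : Prop :=
  (∀ i, v i ≠ 0) ∧
  ∃ w : Fin l → EuclideanSpace ℝ (Fin n), Orthonormal ℝ w ∧
    ∃ a : Fin l → Fin l → ℝ,
      (∀ i, v i = ∑ j ∈ Finset.Iic i, a i j • w j) ∧
      ∀ i j : Fin l, j < i → |a i j| ≤ ε * |a i i|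

section Aux
open Finset
open InnerProductSpace

variable {n : ℕ}

/-- inner zero on a spanning set extends to the span -/
lemma horth {S : Set (EuclideanSpace ℝ (Fin n))} {z : EuclideanSpace ℝ (Fin n)}
    (h : ∀ y ∈ S, ⟪z, y⟫ = 0) : ∀ y ∈ Submodule.span ℝ S, ⟪z, y⟫ = 0 := by
  intro y hy
  induction hy using Submodule.span_induction with
  | mem x hx => exact h x hx
  | zero => simp
  | add x y _ _ hx hy => rw [inner_add_right, hx, hy, add_zero]
  | smul a x _ hx => rw [inner_smul_right, hx, mul_zero]

lemma smul_normed_eq (f : ℕ → EuclideanSpace ℝ (Fin n)) (j : ℕ)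
    (hg : gramSchmidt ℝ f j ≠ 0) :
    ‖gramSchmidt ℝ f j‖ • gramSchmidtNormed ℝ f j = gramSchmidt ℝ f j := by
  rw [gramSchmidtNormed, smul_smul]
  norm_num [mul_inv_cancel₀ (norm_ne_zero_iff.2 hg)]

lemma span_normed_eq (f : ℕ → EuclideanSpace ℝ (Fin n)) (k : ℕ) :
    Submodule.span ℝ (gramSchmidtNormed ℝ f '' Set.Iio k)
      = Submodule.span ℝ (f '' Set.Iio k) := by
  rw [← span_gramSchmidt_Iio ℝ f k]
  apply Submodule.span_eq_span
  · rintro _ ⟨j, hj, rfl⟩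
    exact Submodule.smul_mem _ _ (Submodule.subset_span ⟨j, hj, rfl⟩)
  · rintro _ ⟨j, hj, rfl⟩
    by_cases hg : gramSchmidt ℝ f j = 0
    · rw [hg]; exact Submodule.zero_mem _
    · rw [← smul_normed_eq f j hg]
      exact Submodule.smul_mem _ _ (Submodule.subset_span ⟨j, hj, rfl⟩)

lemma normed_zero_or_unit (f : ℕ → EuclideanSpace ℝ (Fin n)) (j : ℕ) :
    gramSchmidtNormed ℝ f j = 0 ∨ ‖gramSchmidtNormed ℝ f j‖ = 1 := by
  by_cases hg : gramSchmidt ℝ f j = 0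
  · left; rw [gramSchmidtNormed, hg, smul_zero]
  · right; exact norm_smul_inv_norm hg

lemma normed_orth (f : ℕ → EuclideanSpace ℝ (Fin n)) {i j : ℕ} (h : i ≠ j) :
    ⟪gramSchmidtNormed ℝ f i, gramSchmidtNormed ℝ f j⟫ = 0 := by
  rw [gramSchmidtNormed, gramSchmidtNormed, inner_smul_left, inner_smul_right,
    gramSchmidt_orthogonal ℝ f h]
  simp

lemma inner_normed_psum (f : ℕ → EuclideanSpace ℝ (Fin n)) (k : ℕ)
    (x : EuclideanSpace ℝ (Fin n)) {jj : ℕ} (hjj : jj ∈ Finset.range k) :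
    ⟪gramSchmidtNormed ℝ f jj,
        ∑ j ∈ Finset.range k, ⟪gramSchmidtNormed ℝ f j, x⟫ • gramSchmidtNormed ℝ f j⟫
      = ⟪x, gramSchmidtNormed ℝ f jj⟫ := by
  rw [inner_sum, Finset.sum_eq_single_of_mem jj hjj]
  · rw [real_inner_smul_right]
    rcases normed_zero_or_unit f jj with h0 | h1
    · rw [h0]; simp
    · rw [real_inner_self_eq_norm_sq, h1, real_inner_comm]; ring
  · intro b _ hb
    rw [real_inner_smul_right, normed_orth f (Ne.symm hb), mul_zero]

lemma proj_eq_psum (f : ℕ → EuclideanSpace ℝ (Fin n)) (k : ℕ) (x : EuclideanSpace ℝ (Fin n)) :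
    (Submodule.orthogonalProjectionOnto (Submodule.span ℝ (f '' Set.Iio k)) x : EuclideanSpace ℝ (Fin n))
      = ∑ j ∈ Finset.range k, ⟪gramSchmidtNormed ℝ f j, x⟫ • gramSchmidtNormed ℝ f j := by
  rw [← Submodule.starProjection_apply]
  apply Submodule.eq_starProjection_of_mem_of_inner_eq_zero
  · exact Submodule.sum_mem _ fun j hj => Submodule.smul_mem _ _
      (by rw [← span_normed_eq f k]
          exact Submodule.subset_span ⟨j, Finset.mem_range.1 hj, rfl⟩)
  · intro w hw
    rw [← span_normed_eq f k] at hw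
    refine horth ?_ w hw
    rintro _ ⟨jj, hjj, rfl⟩
    rw [inner_sub_left, ← inner_normed_psum f k x (Finset.mem_range.2 hjj),
      real_inner_comm, sub_self]

lemma proj_formula (f : ℕ → EuclideanSpace ℝ (Fin n)) (k : ℕ) (x : EuclideanSpace ℝ (Fin n)) :
    ‖(Submodule.orthogonalProjectionOnto (Submodule.span ℝ (f '' Set.Iio k)) x : EuclideanSpace ℝ (Fin n))‖ ^ 2
      = ∑ j ∈ Finset.range k, ⟪x, gramSchmidtNormed ℝ f j⟫ ^ 2 := by
  rw [proj_eq_psum, ← real_inner_self_eq_norm_sq, sum_inner]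
  refine Finset.sum_congr rfl fun j hj => ?_
  rw [real_inner_smul_left, inner_normed_psum f k x hj, real_inner_comm, sq]

/-- extend a `Fin k`-indexed family to `ℕ` by zero -/
def extz {α : Type*} [Zero α] {k : ℕ} (v : Fin k → α) : ℕ → α :=
  fun m => if h : m < k then v ⟨m, h⟩ else 0

lemma measurable_extz {k : ℕ} (m : ℕ) :
    Measurable (fun v : Fin k → EuclideanSpace ℝ (Fin n) => extz v m) := by
  unfold extz
  by_cases h : m < k
  · simp only [dif_pos h]; exact measurable_pi_apply _
  · simp only [dif_neg h]; exact measurable_const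

lemma measurable_gs {k : ℕ} (j : ℕ) :
    Measurable (fun v : Fin k → EuclideanSpace ℝ (Fin n) => gramSchmidt ℝ (extz v) j) := by
  induction j using Nat.strong_induction_on with
  | _ j ih =>
    have : (fun v : Fin k → EuclideanSpace ℝ (Fin n) => gramSchmidt ℝ (extz v) j)
        = fun v => extz v j - ∑ i ∈ Finset.Iio j,
            (⟪gramSchmidt ℝ (extz v) i, extz v j⟫ / (‖gramSchmidt ℝ (extz v) i‖ : ℝ) ^ 2) •
              gramSchmidt ℝ (extz v) i := by
      funext v
      rw [gramSchmidt_def]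
      congr 1
      refine Finset.sum_congr rfl fun i _ => ?_
      rw [Submodule.starProjection_singleton]
      norm_num
    rw [this]
    refine (measurable_extz j).sub (Finset.measurable_sum _ fun i hi => ?_)
    have hii := ih i (Finset.mem_Iio.1 hi)
    exact ((hii.inner (measurable_extz j)).div ((hii.norm).pow measurable_const)).smul hii

lemma measurable_gsn {k : ℕ} (j : ℕ) :
    Measurable (fun v : Fin k → EuclideanSpace ℝ (Fin n) => gramSchmidtNormed ℝ (extz v) j) := by
  have : (fun v : Fin k → EuclideanSpace ℝ (Fin n) => gramSchmidtNormed ℝ (extz v) j)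
      = fun v => (‖gramSchmidt ℝ (extz v) j‖ : ℝ)⁻¹ • gramSchmidt ℝ (extz v) j := by
    funext v; rw [gramSchmidtNormed]; norm_num
  rw [this]
  exact ((measurable_gs j).norm.inv).smul (measurable_gs j)

/-- the squared norm of the projection, as a jointly measurable function -/
noncomputable def Fsq {k : ℕ} (v : Fin k → EuclideanSpace ℝ (Fin n))
    (x : EuclideanSpace ℝ (Fin n)) : ℝ :=
  ∑ j ∈ Finset.range k, ⟪x, gramSchmidtNormed ℝ (extz v) j⟫ ^ 2

lemma measurable_Fsq {k : ℕ} :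
    Measurable (fun p : (Fin k → EuclideanSpace ℝ (Fin n)) × EuclideanSpace ℝ (Fin n) =>
      Fsq p.1 p.2) := by
  unfold Fsq
  refine Finset.measurable_sum _ fun j _ => ?_
  exact (Measurable.inner measurable_snd ((measurable_gsn j).comp measurable_fst)).pow
    measurable_const

lemma ae_norm_one (μ : Measure (EuclideanSpace ℝ (Fin n))) [IsProbabilityMeasure μ]
    (hsph : μ (Metric.sphere (0 : EuclideanSpace ℝ (Fin n)) 1) = 1) :
    ∀ᵐ x ∂μ, ‖x‖ = 1 := by
  rw [ae_iff]
  refine measure_mono_null (fun x hx => ?_)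
    (by rw [measure_compl Metric.isClosed_sphere.measurableSet (measure_ne_top μ _), hsph, measure_univ,
      tsub_self] :
      μ (Metric.sphere (0 : EuclideanSpace ℝ (Fin n)) 1)ᶜ = 0)
  simp only [Set.mem_compl_iff, mem_sphere_zero_iff_norm]
  exact hx

lemma markov_slice {l k : ℕ} (hl : 2 ≤ l) (hk : k ≤ l)
    (μ : Measure (EuclideanSpace ℝ (Fin n))) [IsProbabilityMeasure μ]
    (hsph : μ (Metric.sphere (0 : EuclideanSpace ℝ (Fin n)) 1) = 1)
    (hmom : ∀ θ : EuclideanSpace ℝ (Fin n), ‖θ‖ = 1 →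
      ∫ x, ⟪x, θ⟫ ^ 2 ∂μ ≤ (l : ℝ) ^ (-(50 : ℤ)))
    (v : Fin k → EuclideanSpace ℝ (Fin n)) :
    μ {x | ((l:ℝ)^(-(21:ℤ))/2)^2 ≤ Fsq v x} ≤ ENNReal.ofReal (4 * (l:ℝ)^(-(7:ℤ))) := by
  have hL0 : (0:ℝ) < (l:ℝ) := by exact_mod_cast Nat.lt_of_lt_of_le (by norm_num) hl
  have hne := hL0.ne'
  set t2 : ℝ := ((l:ℝ)^(-(21:ℤ))/2)^2 with ht2def
  have ht2 : 0 < t2 := by positivity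
  have hne1 : ∀ j, ‖gramSchmidtNormed ℝ (extz v) j‖ ≤ 1 := by
    intro j
    rcases normed_zero_or_unit (extz v) j with h0 | h1
    · rw [h0]; simp
    · rw [h1]
  have hae := ae_norm_one μ hsph
  have hint : ∀ j : ℕ,
      Integrable (fun x : EuclideanSpace ℝ (Fin n) =>
        ⟪x, gramSchmidtNormed ℝ (extz v) j⟫ ^ 2) μ := by
    intro j
    refine (integrable_const (1:ℝ)).mono'
      (((continuous_id.inner continuous_const).pow 2).aestronglyMeasurable) ?_
    filter_upwards [hae] with x hx
    rw [Real.norm_eq_abs, abs_le]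
    constructor
    · nlinarith [sq_nonneg (⟪x, gramSchmidtNormed ℝ (extz v) j⟫ : ℝ)]
    · have h1 := abs_real_inner_le_norm x (gramSchmidtNormed ℝ (extz v) j)
      have h2 : |(⟪x, gramSchmidtNormed ℝ (extz v) j⟫ : ℝ)| ≤ 1 := by
        refine h1.trans ?_
        rw [hx, one_mul]; exact hne1 j
      calc (⟪x, gramSchmidtNormed ℝ (extz v) j⟫ : ℝ) ^ 2
          = |(⟪x, gramSchmidtNormed ℝ (extz v) j⟫ : ℝ)| ^ 2 := (sq_abs _).symm
        _ ≤ 1 ^ 2 := by nlinarith [abs_nonneg (⟪x, gramSchmidtNormed ℝ (extz v) j⟫ : ℝ)]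
        _ = 1 := one_pow 2
  have hterm : ∀ j : ℕ,
      ∫ x, ⟪x, gramSchmidtNormed ℝ (extz v) j⟫ ^ 2 ∂μ ≤ (l:ℝ)^(-(50:ℤ)) := by
    intro j
    rcases normed_zero_or_unit (extz v) j with h0 | h1
    · simp only [h0, inner_zero_right]
      rw [show ((0:ℝ)^2 : ℝ) = 0 by norm_num, integral_zero]
      positivity
    · exact hmom _ h1
  have hFint : Integrable (fun x => Fsq v x) μ := by
    unfold Fsq
    exact integrable_finset_sum _ fun j _ => hint j
  have hFle : ∫ x, Fsq v x ∂μ ≤ t2 * (4 * (l:ℝ)^(-(7:ℤ))) := by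
    have e1 : ∫ x, Fsq v x ∂μ
        = ∑ j ∈ Finset.range k, ∫ x, ⟪x, gramSchmidtNormed ℝ (extz v) j⟫ ^ 2 ∂μ := by
      unfold Fsq
      exact integral_finset_sum _ fun j _ => hint j
    rw [e1]
    calc ∑ j ∈ Finset.range k, ∫ x, ⟪x, gramSchmidtNormed ℝ (extz v) j⟫ ^ 2 ∂μ
        ≤ ∑ _j ∈ Finset.range k, (l:ℝ)^(-(50:ℤ)) :=
          Finset.sum_le_sum fun j _ => hterm j
      _ = (k:ℝ) * (l:ℝ)^(-(50:ℤ)) := by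
          rw [Finset.sum_const, Finset.card_range, nsmul_eq_mul]
      _ ≤ t2 * (4 * (l:ℝ)^(-(7:ℤ))) := by
          rw [ht2def]
          have e2 : ((l:ℝ)^(-(21:ℤ))/2)^2 * (4 * (l:ℝ)^(-(7:ℤ)))
              = (l:ℝ) * (l:ℝ)^(-(50:ℤ)) := by
            have h50 : ((l:ℝ)) * (l:ℝ)^(-(50:ℤ)) = (l:ℝ)^(1 + -(50:ℤ)) := by
              rw [zpow_add₀ hne, zpow_one]
            rw [div_pow, sq, ← zpow_add₀ hne, h50]
            norm_num
            field_simp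
          rw [e2]
          exact mul_le_mul_of_nonneg_right (by exact_mod_cast hk) (zpow_nonneg hL0.le _)
  have hmar := mul_meas_ge_le_integral_of_nonneg
    (Filter.Eventually.of_forall fun x => by unfold Fsq; positivity) hFint t2
  have hto : (μ {x | t2 ≤ Fsq v x}).toReal ≤ 4 * (l:ℝ)^(-(7:ℤ)) :=
    le_of_mul_le_mul_left (hmar.trans hFle) ht2
  calc μ {x | t2 ≤ Fsq v x}
      = ENNReal.ofReal ((μ {x | t2 ≤ Fsq v x}).toReal) :=
        (ENNReal.ofReal_toReal (measure_ne_top μ _)).symm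
    _ ≤ ENNReal.ofReal (4 * (l:ℝ)^(-(7:ℤ))) := ENNReal.ofReal_le_ofReal hto

lemma det_eps {l : ℕ} (hl : 2 ≤ l) (v : Fin l → EuclideanSpace ℝ (Fin n))
    (hnorm : ∀ i, ‖v i‖ = 1)
    (hproj : ∀ i : Fin l, 1 ≤ (i : ℕ) →
      ‖(Submodule.orthogonalProjectionOnto
          (Submodule.span ℝ {u | ∃ j, j < i ∧ u = v j}) (v i) :
        EuclideanSpace ℝ (Fin n))‖ < (l : ℝ) ^ (-(21 : ℤ)) / 2) :
    (∀ i, v i ≠ 0) ∧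
    ∃ w : Fin l → EuclideanSpace ℝ (Fin n), Orthonormal ℝ w ∧
      ∃ a : Fin l → Fin l → ℝ,
        (∀ i, v i = ∑ j ∈ Finset.Iic i, a i j • w j) ∧
        ∀ i j : Fin l, j < i → |a i j| ≤ ((l : ℝ) ^ (-(20 : ℤ)) / 2) * |a i i| := by
  classical
  have hL0 : (0:ℝ) < (l:ℝ) := by exact_mod_cast Nat.lt_of_lt_of_le (by norm_num) hl
  have hL1 : (1:ℝ) ≤ (l:ℝ) := by exact_mod_cast Nat.le_of_lt (Nat.lt_of_lt_of_le (by norm_num) hl)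
  have hL2 : (2:ℝ) ≤ (l:ℝ) := by exact_mod_cast hl
  set t : ℝ := (l:ℝ) ^ (-(21:ℤ)) / 2 with htdef
  have ht_pos : 0 < t := by positivity
  have ht_half : t ≤ 1/2 := by
    rw [htdef]
    have := zpow_le_one_of_nonpos₀ hL1 (by norm_num : (-(21:ℤ)) ≤ 0)
    linarith
  set f : ℕ → EuclideanSpace ℝ (Fin n) := extz v with hfdef
  have hfv : ∀ i : Fin l, f (i:ℕ) = v i := by
    intro i; simp [hfdef, extz, i.isLt]
  set g : ℕ → EuclideanSpace ℝ (Fin n) := gramSchmidt ℝ f with hgdef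
  -- orthogonality of g i to the span of previous f's
  have hKorth : ∀ i : Fin l, ∀ y ∈ Submodule.span ℝ (f '' Set.Iio (i:ℕ)),
      ⟪g (i:ℕ), y⟫ = 0 := by
    intro i
    refine horth ?_
    rintro _ ⟨m, hm, rfl⟩
    have hfm : f m ∈ Submodule.span ℝ (gramSchmidt ℝ f '' Set.Iic m) :=
      mem_span_gramSchmidt ℝ f le_rfl
    refine horth ?_ (f m) hfm
    rintro _ ⟨m', hm', rfl⟩
    exact gramSchmidt_orthogonal ℝ f (by
      have : m' ≤ m := hm'
      have : m < (i:ℕ) := hm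
      omega)
  have hsub : ∀ i : Fin l, f (i:ℕ) - g (i:ℕ) ∈ Submodule.span ℝ (f '' Set.Iio (i:ℕ)) := by
    intro i
    have hd := gramSchmidt_def ℝ f (i:ℕ)
    have : f (i:ℕ) - g (i:ℕ) = ∑ j ∈ Finset.Iio (i:ℕ),
        ((ℝ ∙ gramSchmidt ℝ f j).starProjection (f (i:ℕ)) :
          EuclideanSpace ℝ (Fin n)) := by
      rw [hgdef, hd]
      abel
    rw [this, ← span_gramSchmidt_Iio ℝ f (i:ℕ)]
    refine Submodule.sum_mem _ fun j hj => ?_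
    have hle : (ℝ ∙ gramSchmidt ℝ f j) ≤ Submodule.span ℝ (gramSchmidt ℝ f '' Set.Iio (i:ℕ)) :=
      Submodule.span_le.2 (Set.singleton_subset_iff.2
        (Submodule.subset_span ⟨j, Finset.mem_Iio.1 hj, rfl⟩))
    exact hle (Submodule.starProjection_apply_mem _ _)
  have hs_eq : ∀ i : Fin l,
      ((Submodule.orthogonalProjectionOnto (Submodule.span ℝ (f '' Set.Iio (i:ℕ))) (f (i:ℕ))) :
        EuclideanSpace ℝ (Fin n)) = f (i:ℕ) - g (i:ℕ) := by
    intro i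
    rw [← Submodule.starProjection_apply]
    apply Submodule.eq_starProjection_of_mem_of_inner_eq_zero (hsub i)
    intro w hw
    have hcc : f (i:ℕ) - (f (i:ℕ) - g (i:ℕ)) = g (i:ℕ) := by abel
    rw [hcc]
    exact hKorth i w hw
  have hset : ∀ i : Fin l, {u | ∃ j, j < i ∧ u = v j} = f '' Set.Iio (i:ℕ) := by
    intro i
    ext u
    constructor
    · rintro ⟨j, hj, rfl⟩
      exact ⟨(j:ℕ), hj, hfv j⟩
    · rintro ⟨m, hm, rfl⟩
      have hml : m < l := lt_trans hm i.isLt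
      refine ⟨⟨m, hml⟩, hm, ?_⟩
      rw [← hfv ⟨m, hml⟩]
  have hslt : ∀ i : Fin l, ‖f (i:ℕ) - g (i:ℕ)‖ < t := by
    intro i
    by_cases h1 : 1 ≤ (i:ℕ)
    · have := hproj i h1
      rw [hset i, ← hfv i] at this
      rw [← hs_eq i]
      exact this
    · have h0 : (i:ℕ) = 0 := by omega
      rw [h0]
      have : g 0 = f 0 := gramSchmidt_bot ℝ f
      rw [this, sub_self, norm_zero]
      exact ht_pos
  have hpyth : ∀ i : Fin l, ‖g (i:ℕ)‖^2 = 1 - ‖f (i:ℕ) - g (i:ℕ)‖^2 := by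
    intro i
    have horthg : ⟪g (i:ℕ), f (i:ℕ) - g (i:ℕ)⟫ = 0 := hKorth i _ (hsub i)
    have hdecomp : f (i:ℕ) = g (i:ℕ) + (f (i:ℕ) - g (i:ℕ)) := by abel
    have hfn : ‖f (i:ℕ)‖ = 1 := by rw [hfv i]; exact hnorm i
    have := norm_add_sq_real (g (i:ℕ)) (f (i:ℕ) - g (i:ℕ))
    rw [← hdecomp, horthg, hfn] at this
    nlinarith
  have hghalf : ∀ i : Fin l, 1/2 ≤ ‖g (i:ℕ)‖ := by
    intro i
    have h1 := hpyth i
    have h2 := hslt i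
    have h3 := norm_nonneg (g (i:ℕ))
    have h4 := norm_nonneg (f (i:ℕ) - g (i:ℕ))
    nlinarith
  have hgne : ∀ i : Fin l, ‖g (i:ℕ)‖ ≠ 0 := fun i => by
    have := hghalf i; intro h; rw [h] at this; linarith
  set w : Fin l → EuclideanSpace ℝ (Fin n) := fun i => ‖g (i:ℕ)‖⁻¹ • g (i:ℕ) with hwdef
  have hwg : ∀ i : Fin l, g (i:ℕ) = ‖g (i:ℕ)‖ • w i := by
    intro i
    rw [hwdef, smul_smul, mul_inv_cancel₀ (hgne i), one_smul]
  have hon : Orthonormal ℝ w := by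
    rw [orthonormal_iff_ite]
    intro i j
    by_cases hij : i = j
    · subst hij
      simp only [if_pos rfl, hwdef]
      rw [inner_smul_left, inner_smul_right, real_inner_self_eq_norm_sq]
      simp only [RCLike.star_def, starRingEnd_apply, star_trivial]
      rw [sq, ← mul_assoc, ← mul_assoc, mul_comm (‖g (i:ℕ)‖⁻¹) (‖g (i:ℕ)‖⁻¹)]
      rw [mul_assoc (‖g (i:ℕ)‖⁻¹ * ‖g (i:ℕ)‖⁻¹)]
      rw [show ‖g (i:ℕ)‖⁻¹ * ‖g (i:ℕ)‖⁻¹ * (‖g (i:ℕ)‖ * ‖g (i:ℕ)‖) = 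
        (‖g (i:ℕ)‖⁻¹ * ‖g (i:ℕ)‖) * (‖g (i:ℕ)‖⁻¹ * ‖g (i:ℕ)‖) by ring]
      rw [inv_mul_cancel₀ (hgne i), one_mul]
      simp
    · rw [if_neg hij, hwdef, inner_smul_left, inner_smul_right]
      rw [gramSchmidt_orthogonal ℝ f (fun h => hij (Fin.val_injective h))]
      simp
  set a : Fin l → Fin l → ℝ := fun i j => ⟪w j, v i⟫ with hadef
  have hww : ∀ i j : Fin l, ⟪w i, w j⟫ = if i = j then 1 else 0 :=
    orthonormal_iff_ite.1 hon
  -- representation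
  have hrep : ∀ i : Fin l, v i = ∑ j ∈ Finset.Iic i, a i j • w j := by
    intro i
    set d : EuclideanSpace ℝ (Fin n) := v i - ∑ j ∈ Finset.Iic i, a i j • w j with hddef
    have hdspan : d ∈ Submodule.span ℝ (gramSchmidt ℝ f '' Set.Iic (i:ℕ)) := by
      refine Submodule.sub_mem _ ?_ ?_
      · rw [span_gramSchmidt_Iic ℝ f (i:ℕ), ← hfv i]
        exact Submodule.subset_span ⟨(i:ℕ), Set.mem_Iic.mpr le_rfl, rfl⟩
      · refine Submodule.sum_mem _ fun j hj => Submodule.smul_mem _ _ ?_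
        have : w j = ‖g (j:ℕ)‖⁻¹ • g (j:ℕ) := rfl
        rw [this]
        refine Submodule.smul_mem _ _ (Submodule.subset_span ⟨(j:ℕ), ?_, rfl⟩)
        exact_mod_cast Finset.mem_Iic.1 hj
    have hdorthw : ∀ j : Fin l, j ≤ i → ⟪d, w j⟫ = 0 := by
      intro j hj
      rw [hddef, inner_sub_left, sum_inner]
      have hsum : ∑ j' ∈ Finset.Iic i, ⟪a i j' • w j', w j⟫ = a i j := by
        rw [Finset.sum_eq_single_of_mem j (Finset.mem_Iic.2 hj)]
        · rw [real_inner_smul_left, hww j j, if_pos rfl, mul_one]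
        · intro b _ hb
          rw [real_inner_smul_left, hww b j, if_neg hb, mul_zero]
      rw [hsum, hadef]
      rw [real_inner_comm]
      ring
    have hdorth : ∀ y ∈ Submodule.span ℝ (gramSchmidt ℝ f '' Set.Iic (i:ℕ)), ⟪d, y⟫ = 0 := by
      refine horth ?_
      rintro _ ⟨m, hm, rfl⟩
      have hml : m < l := lt_of_le_of_lt hm i.isLt
      have : gramSchmidt ℝ f m = ‖g (m:ℕ)‖ • w ⟨m, hml⟩ := hwg ⟨m, hml⟩
      rw [this, real_inner_smul_right, hdorthw ⟨m, hml⟩ (by exact_mod_cast hm), mul_zero]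
    have : ⟪d, d⟫ = 0 := hdorth d hdspan
    have hd0 : d = 0 := inner_self_eq_zero.1 this
    rw [hddef] at hd0
    exact sub_eq_zero.1 hd0
  -- diagonal coefficient
  have hdiag : ∀ i : Fin l, a i i = ‖g (i:ℕ)‖ := by
    intro i
    have hvi : v i = g (i:ℕ) + (f (i:ℕ) - g (i:ℕ)) := by rw [← hfv i]; abel
    rw [hadef]
    simp only []
    rw [hvi, inner_add_right, hwdef, real_inner_smul_left, real_inner_self_eq_norm_sq,
      real_inner_smul_left, hKorth i _ (hsub i), mul_zero, add_zero, sq, ← mul_assoc,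
      inv_mul_cancel₀ (hgne i), one_mul]
  have hdiag_half : ∀ i : Fin l, 1/2 ≤ a i i := by
    intro i; rw [hdiag i]; exact hghalf i
  -- off-diagonal bound
  have hoff : ∀ i j : Fin l, j < i → |a i j| < t := by
    intro i j hj
    have hvi : v i = g (i:ℕ) + (f (i:ℕ) - g (i:ℕ)) := by rw [← hfv i]; abel
    have h1 : ⟪w j, g (i:ℕ)⟫ = 0 := by
      rw [hwdef, real_inner_smul_left]
      rw [real_inner_comm, gramSchmidt_orthogonal ℝ f
        (by exact fun h => (Fin.val_injective h ▸ hj).false : (i:ℕ) ≠ (j:ℕ)), mul_zero]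
    have h2 : a i j = ⟪w j, f (i:ℕ) - g (i:ℕ)⟫ := by
      rw [hadef]
      simp only []
      rw [hvi, inner_add_right, h1, zero_add]
    rw [h2]
    calc |⟪w j, f (i:ℕ) - g (i:ℕ)⟫| ≤ ‖w j‖ * ‖f (i:ℕ) - g (i:ℕ)‖ :=
          abs_real_inner_le_norm _ _
      _ = ‖f (i:ℕ) - g (i:ℕ)‖ := by rw [hon.1 j, one_mul]
      _ < t := hslt i
  -- final assembly
  refine ⟨fun i => fun h => by simpa [h] using (hnorm i).symm, w, hon, a, hrep, ?_⟩
  intro i j hj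
  have h1 : |a i j| < t := hoff i j hj
  have h2 : (1:ℝ)/2 ≤ a i i := hdiag_half i
  have h3 : |a i i| = a i i := abs_of_nonneg (by linarith)
  have hts : t ≤ ((l:ℝ) ^ (-(20:ℤ)) / 2) * (1/2) := by
    have h20 : (l:ℝ) ^ (-(20:ℤ)) = (l:ℝ) * (l:ℝ) ^ (-(21:ℤ)) := by
      rw [← zpow_one_add₀ hL0.ne']
      norm_num
    have hz : (0:ℝ) ≤ (l:ℝ) ^ (-(21:ℤ)) := zpow_nonneg hL0.le _
    rw [htdef, h20]
    nlinarith
  have heps : (0:ℝ) ≤ (l:ℝ) ^ (-(20:ℤ)) / 2 := by positivity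
  rw [h3]
  calc |a i j| ≤ t := le_of_lt h1
    _ ≤ ((l:ℝ) ^ (-(20:ℤ)) / 2) * (1/2) := hts
    _ ≤ ((l:ℝ) ^ (-(20:ℤ)) / 2) * a i i := mul_le_mul_of_nonneg_left h2 heps


end Aux

open Finset in
/-- If `μ` is a probability measure on `S^{n−1}` with `∫ (x·θ)² dμ ≤ ℓ^{−50}` for every
unit vector `θ`, and `X₁,…,X_ℓ` are i.i.d. with law `μ`, then with probability at least
`1 − 4ℓ^{−6}` every `X_i` (i ≥ 2) has projection of norm `< ℓ^{−21}/2` onto the span of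
its predecessors; in particular, `(X₁,…,X_ℓ)` is `(ℓ^{−20}/2)`-orthogonal with positive
probability. -/
theorem stmt9 {n l : ℕ} (hl : 2 ≤ l) (hn : 1 ≤ n)
    {Ω : Type*} [MeasurableSpace Ω] (P : Measure Ω) [IsProbabilityMeasure P]
    (μ : Measure (EuclideanSpace ℝ (Fin n))) [IsProbabilityMeasure μ]
    (hsph : μ (Metric.sphere (0 : EuclideanSpace ℝ (Fin n)) 1) = 1)
    (hmom : ∀ θ : EuclideanSpace ℝ (Fin n), ‖θ‖ = 1 →
      ∫ x, ⟪x, θ⟫ ^ 2 ∂μ ≤ (l : ℝ) ^ (-(50 : ℤ)))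
    (X : Fin l → Ω → EuclideanSpace ℝ (Fin n)) (hXm : ∀ i, Measurable (X i))
    (hindep : ProbabilityTheory.iIndepFun X P)
    (hlaw : ∀ i, P.map (X i) = μ) :
    1 - ENNReal.ofReal (4 * (l : ℝ) ^ (-(6 : ℤ))) ≤
        P {ω | ∀ i : Fin l, 1 ≤ (i : ℕ) →
          ‖(Submodule.orthogonalProjectionOnto
              (Submodule.span ℝ {v | ∃ j, j < i ∧ v = X j ω}) (X i ω) :
            EuclideanSpace ℝ (Fin n))‖ < (l : ℝ) ^ (-(21 : ℤ)) / 2}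
      ∧ 0 < P {ω | IsEpsOrthogonal ((l : ℝ) ^ (-(20 : ℤ)) / 2) (fun i => X i ω)} := by
  classical
  have hL0 : (0:ℝ) < (l:ℝ) := by exact_mod_cast Nat.lt_of_lt_of_le (by norm_num) hl
  have hL2 : (2:ℝ) ≤ (l:ℝ) := by exact_mod_cast hl
  set t : ℝ := (l:ℝ) ^ (-(21:ℤ)) / 2 with htdef
  have ht0 : 0 ≤ t := by positivity
  set t2 : ℝ := t^2 with ht2def
  set G : Set Ω := {ω | ∀ i : Fin l, 1 ≤ (i : ℕ) →
      ‖(Submodule.orthogonalProjectionOnto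
          (Submodule.span ℝ {v | ∃ j, j < i ∧ v = X j ω}) (X i ω) :
        EuclideanSpace ℝ (Fin n))‖ < t} with hGdef
  set Y : (i : Fin l) → Ω → (Fin (i:ℕ) → EuclideanSpace ℝ (Fin n)) :=
    fun i ω m => X ⟨m.1, lt_trans m.2 i.isLt⟩ ω with hYdef
  set B : Fin l → Set Ω := fun i => {ω | t2 ≤ Fsq (Y i ω) (X i ω)} with hBdef
  have hYm : ∀ i, Measurable (Y i) := fun i =>
    measurable_pi_lambda _ fun m => hXm _
  have hsetX : ∀ (ω : Ω) (i : Fin l),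
      {v | ∃ j, j < i ∧ v = X j ω} = extz (Y i ω) '' Set.Iio (i:ℕ) := by
    intro ω i
    ext u
    constructor
    · rintro ⟨j, hj, rfl⟩
      have hjv : (j:ℕ) < (i:ℕ) := hj
      refine ⟨(j:ℕ), hjv, ?_⟩
      simp only [extz, hYdef, dif_pos hjv]
    · rintro ⟨m, hm, rfl⟩
      have hm' : m < (i:ℕ) := hm
      refine ⟨⟨m, lt_trans hm' i.isLt⟩, ?_, ?_⟩
      · exact hm'
      · simp only [extz, hYdef, dif_pos hm']
  have hkey : ∀ (ω : Ω) (i : Fin l),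
      ‖(Submodule.orthogonalProjectionOnto
          (Submodule.span ℝ {v | ∃ j, j < i ∧ v = X j ω}) (X i ω) :
        EuclideanSpace ℝ (Fin n))‖ ^ 2 = Fsq (Y i ω) (X i ω) := by
    intro ω i
    rw [hsetX ω i]
    exact proj_formula (extz (Y i ω)) (i:ℕ) (X i ω)
  have hBle : ∀ i : Fin l, P (B i) ≤ ENNReal.ofReal (4 * (l:ℝ)^(-(7:ℤ))) := by
    intro i
    have hpair : Measurable (fun ω => (Y i ω, X i ω)) := (hYm i).prodMk (hXm i)
    have hSmeas : MeasurableSet {p : (Fin (i:ℕ) → EuclideanSpace ℝ (Fin n)) ×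
        EuclideanSpace ℝ (Fin n) | t2 ≤ Fsq p.1 p.2} :=
      measurableSet_le measurable_const measurable_Fsq
    have hid : ProbabilityTheory.IndepFun (Y i) (X i) P := by
      have hdisj : Disjoint (Finset.Iio i) ({i} : Finset (Fin l)) := by
        simp [Finset.disjoint_singleton_right]
      have h := hindep.indepFun_finset (Finset.Iio i) {i} hdisj hXm
      have hφ : Measurable (fun (u : (j : (Finset.Iio i : Finset (Fin l))) →
          EuclideanSpace ℝ (Fin n)) (m : Fin (i:ℕ)) =>
            u ⟨⟨m.1, lt_trans m.2 i.isLt⟩, Finset.mem_Iio.2 m.2⟩) :=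
        measurable_pi_lambda _ fun m => measurable_pi_apply _
      have hψ : Measurable (fun (u : (j : ({i} : Finset (Fin l))) →
          EuclideanSpace ℝ (Fin n)) => u ⟨i, Finset.mem_singleton_self i⟩) :=
        measurable_pi_apply _
      exact h.comp hφ hψ
    have hmap : P.map (fun ω => (Y i ω, X i ω))
        = (P.map (Y i)).prod (P.map (X i)) :=
      (ProbabilityTheory.indepFun_iff_map_prod_eq_prod_map_map
        (hYm i).aemeasurable (hXm i).aemeasurable).1 hid
    haveI : IsProbabilityMeasure (P.map (Y i)) :=
      Measure.isProbabilityMeasure_map (hYm i).aemeasurable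
    have e1 : P (B i) = (P.map (fun ω => (Y i ω, X i ω)))
        {p : (Fin (i:ℕ) → EuclideanSpace ℝ (Fin n)) × EuclideanSpace ℝ (Fin n) |
          t2 ≤ Fsq p.1 p.2} := by
      rw [Measure.map_apply hpair hSmeas]
      rfl
    rw [e1, hmap, hlaw i, Measure.prod_apply hSmeas]
    calc ∫⁻ y, μ {x | t2 ≤ Fsq y x} ∂(P.map (Y i))
        ≤ ∫⁻ _, ENNReal.ofReal (4 * (l:ℝ)^(-(7:ℤ))) ∂(P.map (Y i)) := by
          refine lintegral_mono fun y => ?_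
          have := markov_slice hl (le_of_lt i.isLt) μ hsph hmom y
          rw [ht2def, htdef]
          exact this
      _ = ENNReal.ofReal (4 * (l:ℝ)^(-(7:ℤ))) := by
          rw [lintegral_const, measure_univ, mul_one]
  have hGc : Gᶜ ⊆ ⋃ i, B i := by
    intro ω hω
    rw [hGdef] at hω
    simp only [Set.mem_compl_iff, Set.mem_setOf_eq, not_forall, not_lt] at hω
    obtain ⟨i, h1i, hle⟩ := hω
    refine Set.mem_iUnion.2 ⟨i, ?_⟩
    rw [hBdef]
    simp only [Set.mem_setOf_eq]
    rw [← hkey ω i, ht2def]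
    exact pow_le_pow_left₀ ht0 hle 2
  have hsum : P Gᶜ ≤ ENNReal.ofReal (4 * (l:ℝ)^(-(6:ℤ))) := by
    calc P Gᶜ ≤ P (⋃ i, B i) := measure_mono hGc
      _ ≤ ∑' i, P (B i) := measure_iUnion_le B
      _ = ∑ i, P (B i) := tsum_fintype _
      _ ≤ ∑ _i : Fin l, ENNReal.ofReal (4 * (l:ℝ)^(-(7:ℤ))) :=
          Finset.sum_le_sum fun i _ => hBle i
      _ = (l : ℝ≥0∞) * ENNReal.ofReal (4 * (l:ℝ)^(-(7:ℤ))) := by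
          rw [Finset.sum_const, Finset.card_univ, Fintype.card_fin, nsmul_eq_mul]
      _ = ENNReal.ofReal (4 * (l:ℝ)^(-(6:ℤ))) := by
          rw [← ENNReal.ofReal_natCast l, ← ENNReal.ofReal_mul (by positivity)]
          congr 1
          have h7 : (l:ℝ) * (4 * (l:ℝ)^(-(7:ℤ))) = 4 * ((l:ℝ) * (l:ℝ)^(-(7:ℤ))) := by ring
          rw [h7, ← zpow_one_add₀ hL0.ne']
          norm_num
  have hfirst : 1 - ENNReal.ofReal (4 * (l:ℝ)^(-(6:ℤ))) ≤ P G := by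
    rw [tsub_le_iff_right]
    calc (1:ℝ≥0∞) = P Set.univ := measure_univ.symm
      _ = P (G ∪ Gᶜ) := by rw [Set.union_compl_self]
      _ ≤ P G + P Gᶜ := measure_union_le _ _
      _ ≤ P G + ENNReal.ofReal (4 * (l:ℝ)^(-(6:ℤ))) := add_le_add le_rfl hsum
  refine ⟨hfirst, ?_⟩
  set A : Set Ω := ⋂ i, (X i) ⁻¹' Metric.sphere (0 : EuclideanSpace ℝ (Fin n)) 1 with hAdef
  have hA0 : P Aᶜ = 0 := by
    rw [hAdef, Set.compl_iInter]
    refine le_antisymm ?_ zero_le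
    calc P (⋃ i, ((X i) ⁻¹' Metric.sphere 0 1)ᶜ)
        ≤ ∑' i, P (((X i) ⁻¹' Metric.sphere 0 1)ᶜ) := measure_iUnion_le _
      _ = 0 := by
          refine ENNReal.tsum_eq_zero.2 fun i => ?_
          rw [← Set.preimage_compl, ← Measure.map_apply (hXm i)
            Metric.isClosed_sphere.measurableSet.compl, hlaw i,
            measure_compl Metric.isClosed_sphere.measurableSet (measure_ne_top μ _),
            hsph, measure_univ, tsub_self]
  have hsubset : G ∩ A ⊆
      {ω | IsEpsOrthogonal ((l : ℝ) ^ (-(20 : ℤ)) / 2) (fun i => X i ω)} := by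
    rintro ω ⟨hG, hA⟩
    have hnorms : ∀ i, ‖X i ω‖ = 1 := by
      intro i
      have := Set.mem_iInter.1 hA i
      rwa [Set.mem_preimage, mem_sphere_zero_iff_norm] at this
    simp only [Set.mem_setOf_eq, IsEpsOrthogonal]
    exact det_eps hl (fun i => X i ω) hnorms hG
  have hPGA : P G ≤ P (G ∩ A) := by
    calc P G ≤ P ((G ∩ A) ∪ Aᶜ) := measure_mono (fun ω hω => by
          by_cases h : ω ∈ A
          · exact Or.inl ⟨hω, h⟩
          · exact Or.inr h)
      _ ≤ P (G ∩ A) + P Aᶜ := measure_union_le _ _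
      _ = P (G ∩ A) := by rw [hA0, add_zero]
  have hlt1 : ENNReal.ofReal (4 * (l:ℝ)^(-(6:ℤ))) < 1 := by
    rw [← ENNReal.ofReal_one]
    refine (ENNReal.ofReal_lt_ofReal_iff (by norm_num)).2 ?_
    have h6 : (64:ℝ) ≤ (l:ℝ)^(6:ℕ) := by
      calc (64:ℝ) = 2^(6:ℕ) := by norm_num
        _ ≤ (l:ℝ)^(6:ℕ) := pow_le_pow_left₀ (by norm_num) hL2 6
    have hzp : (l:ℝ)^(-(6:ℤ)) = ((l:ℝ)^(6:ℕ))⁻¹ := by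
      rw [zpow_neg]
      norm_num
    rw [hzp]
    have hinv : ((l:ℝ)^(6:ℕ))⁻¹ ≤ (64:ℝ)⁻¹ :=
      inv_anti₀ (by norm_num) h6
    calc 4 * ((l:ℝ)^(6:ℕ))⁻¹ ≤ 4 * (64:ℝ)⁻¹ := by linarith
      _ < 1 := by norm_num
  have hpos : (0:ℝ≥0∞) < 1 - ENNReal.ofReal (4 * (l:ℝ)^(-(6:ℤ))) :=
    tsub_pos_iff_lt.2 hlt1
  calc (0:ℝ≥0∞) < 1 - ENNReal.ofReal (4 * (l:ℝ)^(-(6:ℤ))) := hpos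
    _ ≤ P G := hfirst
    _ ≤ P (G ∩ A) := hPGA
    _ ≤ P _ := measure_mono hsubset
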